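/- In U_q(sl3), for all k ≥ 0 and i ∈ {1,2}, E_i^k F_i^k is congruent, modulo the left ideal U_q(sl3)·E_i, to (q^k (q^2;q^2)_k / (1-q^2)^{2k}) (q^{2-2k} K_i^2; q^2)_k K_i^{-k}, where (a;q^2)_k denotes the q-shifted factorial with K_i^2 substituted formally (i.e. the product ∏_{j=0}^{k-1}(1 - q^{2-2k+2j} K_i^2)). -/

import Mathlib

noncomputable section

/-- The defining relations of `U_q(sl3)` inside an `ℝ`-algebra `R`:
generators `E₁ E₂ F₁ F₂` and `K₁ K₂` with inverses `K₁' K₂'`. -/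
structure UqSL3 (R : Type*) [Ring R] [Algebra ℝ R] (q : ℝ)
    (E₁ E₂ F₁ F₂ K₁ K₁' K₂ K₂' : R) : Prop where
  K₁mul : K₁ * K₁' = 1
  K₁mul' : K₁' * K₁ = 1
  K₂mul : K₂ * K₂' = 1
  K₂mul' : K₂' * K₂ = 1
  Kcomm : K₁ * K₂ = K₂ * K₁
  Kcomm' : K₁ * K₂' = K₂' * K₁
  Kcomm'' : K₁' * K₂ = K₂ * K₁'
  KE11 : K₁ * E₁ = (q ^ (2:ℤ)) • (E₁ * K₁)
  KE12 : K₁ * E₂ = (q ^ (-1:ℤ)) • (E₂ * K₁)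
  KE21 : K₂ * E₁ = (q ^ (-1:ℤ)) • (E₁ * K₂)
  KE22 : K₂ * E₂ = (q ^ (2:ℤ)) • (E₂ * K₂)
  KF11 : K₁ * F₁ = (q ^ (-2:ℤ)) • (F₁ * K₁)
  KF12 : K₁ * F₂ = (q ^ (1:ℤ)) • (F₂ * K₁)
  KF21 : K₂ * F₁ = (q ^ (1:ℤ)) • (F₁ * K₂)
  KF22 : K₂ * F₂ = (q ^ (-2:ℤ)) • (F₂ * K₂)
  EF11 : E₁ * F₁ - F₁ * E₁ = (q - q⁻¹)⁻¹ • (K₁ - K₁')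
  EF22 : E₂ * F₂ - F₂ * E₂ = (q - q⁻¹)⁻¹ • (K₂ - K₂')
  EF12 : E₁ * F₂ = F₂ * E₁
  EF21 : E₂ * F₁ = F₁ * E₂
  serreE₁ : E₁ ^ 2 * E₂ - (q + q⁻¹) • (E₁ * E₂ * E₁) + E₂ * E₁ ^ 2 = 0
  serreE₂ : E₂ ^ 2 * E₁ - (q + q⁻¹) • (E₂ * E₁ * E₂) + E₁ * E₂ ^ 2 = 0
  serreF₁ : F₁ ^ 2 * F₂ - (q + q⁻¹) • (F₁ * F₂ * F₁) + F₂ * F₁ ^ 2 = 0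
  serreF₂ : F₂ ^ 2 * F₁ - (q + q⁻¹) • (F₂ * F₁ * F₂) + F₁ * F₂ ^ 2 = 0
lemma rank1 {R : Type*} [Ring R] [Algebra ℝ R] (q : ℝ) (hq0 : 0 < q) (hq1 : q < 1)
    (E F K K' : R) (hKK : K * K' = 1) (hK'K : K' * K = 1)
    (hKE : K * E = (q ^ (2:ℤ)) • (E * K))
    (hKF : K * F = (q ^ (-2:ℤ)) • (F * K))
    (hEF : E * F - F * E = (q - q⁻¹)⁻¹ • (K - K')) (k : ℕ) :
    ∃ u : R, E ^ k * F ^ k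
      = (q ^ (k:ℤ) * (∏ j ∈ Finset.range k, (1 - q ^ (2 + 2 * (j:ℤ)))) / (1 - q ^ 2) ^ (2 * k)) •
          (((List.range k).map (fun j => (1 : R) - q ^ (2 - 2 * (k:ℤ) + 2 * (j:ℤ)) • (K * K))).prod
            * K' ^ k)
        + u * E := by
  have hqne : q ≠ 0 := ne_of_gt hq0
  have h1q2 : (1:ℝ) - q ^ 2 ≠ 0 := by nlinarith
  have hne : q - q⁻¹ ≠ 0 := by
    have h1 : q * q⁻¹ = 1 := mul_inv_cancel₀ hqne
    intro hh
    have hq : q = q⁻¹ := by linarith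
    have h2 : q ^ 2 = 1 := by rw [sq]; nth_rewrite 2 [hq]; exact h1
    nlinarith
  have h2 : q ^ (2:ℤ) = q ^ 2 := by norm_num [zpow_ofNat]
  have hm2 : q ^ (-2:ℤ) = (q⁻¹) ^ 2 := by rw [zpow_neg]; norm_num [zpow_ofNat, inv_pow]
  rw [h2] at hKE
  rw [hm2] at hKF
  have hq2 : (q⁻¹) ^ 2 * q ^ 2 = 1 := by field_simp
  have hq2' : q ^ 2 * (q⁻¹) ^ 2 = 1 := by field_simp
  -- derived relations
  have hEK : E * K = ((q⁻¹) ^ 2) • (K * E) := by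
    rw [hKE, smul_smul, hq2, one_smul]
  have hFK : F * K = (q ^ 2) • (K * F) := by
    rw [hKF, smul_smul, hq2', one_smul]
  have hK'E : K' * E = ((q⁻¹) ^ 2) • (E * K') := by
    calc K' * E = K' * (E * (K * K')) := by rw [hKK, mul_one]
      _ = K' * ((E * K) * K') := by rw [mul_assoc]
      _ = ((q⁻¹) ^ 2) • ((K' * K) * (E * K')) := by
          rw [hEK]; simp only [smul_mul_assoc, mul_smul_comm, mul_assoc]
      _ = ((q⁻¹) ^ 2) • (E * K') := by rw [hK'K, one_mul]
  have hEK' : E * K' = (q ^ 2) • (K' * E) := by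
    rw [hK'E, smul_smul, hq2', one_smul]
  have hK'F : K' * F = (q ^ 2) • (F * K') := by
    calc K' * F = K' * (F * (K * K')) := by rw [hKK, mul_one]
      _ = K' * ((F * K) * K') := by rw [mul_assoc]
      _ = (q ^ 2) • ((K' * K) * (F * K')) := by
          rw [hFK]; simp only [smul_mul_assoc, mul_smul_comm, mul_assoc]
      _ = (q ^ 2) • (F * K') := by rw [hK'K, one_mul]
  have hcKK' : Commute K K' := by show K * K' = K' * K; rw [hKK, hK'K]
  set lam : ℝ := (q - q⁻¹)⁻¹ with hlam
  set β : ℕ → ℝ := fun m => lam * (1 - q ^ (2*m+2)) / (1 - q ^ 2) with hβ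
  set α : ℕ → ℝ := fun m => (q⁻¹) ^ (2*m) * β m with hα
  have hEF' : E * F = F * E + lam • K - lam • K' := by
    have hh := hEF
    rw [smul_sub, sub_eq_iff_eq_add] at hh
    rw [hh]; abel
  have hcomm : ∀ m : ℕ, E * F ^ (m+1)
      = F ^ (m+1) * E + α m • (F ^ m * K) - β m • (F ^ m * K') := by
    intro m
    induction m with
    | zero =>
        have ha : α 0 = lam := by
          simp only [hα, hβ, pow_zero, one_mul, Nat.mul_zero, Nat.zero_add]
          rw [mul_div_assoc, div_self h1q2, mul_one]
        have hb : β 0 = lam := by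
          simp only [hβ, Nat.mul_zero, Nat.zero_add]
          rw [mul_div_assoc, div_self h1q2, mul_one]
        simp only [Nat.zero_add, pow_one, pow_zero, one_mul, ha, hb]
        exact hEF'
    | succ m ih =>
        have ha : α (m+1) = lam + (q⁻¹) ^ 2 * α m := by
          simp only [hα, hβ, inv_pow]
          field_simp
          ring
        have hb : β (m+1) = lam + q ^ 2 * β m := by
          simp only [hβ]
          field_simp
          ring
        calc E * F ^ (m+2) = (E * F ^ (m+1)) * F := by rw [pow_succ, mul_assoc]
          _ = (F ^ (m+1) * E + α m • (F ^ m * K) - β m • (F ^ m * K')) * F := by rw [ih]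
          _ = F ^ (m+1) * (E * F) + α m • (F ^ m * (K * F)) - β m • (F ^ m * (K' * F)) := by
              simp only [sub_mul, add_mul, smul_mul_assoc, mul_assoc]
          _ = F ^ (m+1) * (F * E + lam • K - lam • K')
              + α m • (F ^ m * ((q⁻¹) ^ 2 • (F * K))) - β m • (F ^ m * (q ^ 2 • (F * K'))) := by
              rw [hEF', hKF, hK'F]
          _ = F ^ (m+2) * E + (lam + (q⁻¹) ^ 2 * α m) • (F ^ (m+1) * K)
              - (lam + q ^ 2 * β m) • (F ^ (m+1) * K') := by
              simp only [mul_add, mul_sub, mul_smul_comm, smul_smul, add_smul, pow_succ, mul_assoc]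
              module
          _ = F ^ (m+2) * E + α (m+1) • (F ^ (m+1) * K) - β (m+1) • (F ^ (m+1) * K') := by
              rw [ha, hb]
  -- local definitions
  set Qf : ℕ → R := fun n =>
    ((List.range n).map (fun j => (1 : R) - q ^ (2 - 2 * (n:ℤ) + 2 * (j:ℤ)) • (K * K))).prod
    with hQf
  set C : ℕ → ℝ := fun n =>
    q ^ n * (∏ j ∈ Finset.range n, (1 - q ^ (2 + 2 * j))) / (1 - q ^ 2) ^ (2 * n) with hCdef
  have hcast : ∀ n : ℕ, q ^ (n:ℤ) * (∏ j ∈ Finset.range n, (1 - q ^ (2 + 2 * (j:ℤ))))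
      / (1 - q ^ 2) ^ (2 * n) = C n := by
    intro n
    simp only [hCdef]
    have hp : (∏ j ∈ Finset.range n, ((1:ℝ) - q ^ (2 + 2 * (j:ℤ))))
        = ∏ j ∈ Finset.range n, ((1:ℝ) - q ^ (2 + 2 * j)) := by
      refine Finset.prod_congr rfl fun j _ => ?_
      rw [← zpow_natCast q (2 + 2*j)]
      congr 1
    rw [hp, zpow_natCast]
  have hQsucc : ∀ n : ℕ, Qf (n+1) = (1 - (q⁻¹) ^ (2*n) • (K * K)) * Qf n := by
    intro n
    simp only [hQf, bind_pure_comp, List.map_eq_map, List.map_map, List.range_succ_eq_map,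
      List.map_cons, List.prod_cons, Function.comp_apply, Nat.cast_zero, Nat.cast_succ]
    congr 1
    · congr 2
      rw [inv_pow, ← zpow_natCast q (2*n), ← zpow_neg]
      congr 1
      push_cast
      ring
    · refine congrArg List.prod (List.map_congr_left fun j _ => ?_)
      simp only [Function.comp_apply]
      congr 2
      push_cast
      ring
  have hQK : ∀ n : ℕ, (K * K) * Qf n = Qf n * (K * K) := by
    intro n
    refine (Commute.list_prod_right _ _ fun y hy => ?_).eq
    simp only [List.mem_map, List.mem_range] at hy
    obtain ⟨j, -, rfl⟩ := hy
    exact (Commute.one_right _).sub_right ((Commute.refl _).smul_right _)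
  have hKQ : ∀ n : ℕ, K * (K * (Qf n * K' ^ (n+1))) = Qf n * (K' ^ n * K) := by
    intro n
    calc K * (K * (Qf n * K' ^ (n+1))) = (K * K) * Qf n * K' ^ (n+1) := by
          simp only [mul_assoc]
      _ = Qf n * ((K * K) * K' ^ (n+1)) := by rw [hQK n, mul_assoc]
      _ = Qf n * (K' ^ n * K) := by
          congr 1
          rw [pow_succ']
          calc (K * K) * (K' * K' ^ n) = K * ((K * K') * K' ^ n) := by simp only [mul_assoc]
            _ = K * K' ^ n := by rw [hKK, one_mul]
            _ = K' ^ n * K := (hcKK'.pow_right n).eq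
  have hCsucc : ∀ n : ℕ, C (n+1) = (-(β n)) * C n := by
    intro n
    have hlamval : (q - q⁻¹)⁻¹ = -q / (1 - q^2) := by
      rw [eq_div_iff h1q2, inv_mul_eq_div, div_eq_iff hne]
      field_simp
      ring
    simp only [hCdef, hβ, hlam, hlamval]
    rw [Finset.prod_range_succ]
    field_simp
    ring
  rw [hcast k]
  show ∃ u : R, E ^ k * F ^ k = C k • (Qf k * K' ^ k) + u * E
  induction k with
  | zero => exact ⟨0, by simp [hQf, hCdef]⟩
  | succ k ih =>
    obtain ⟨u, hu⟩ := ih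
    refine ⟨E ^ k * F ^ (k+1) + (α k * (q⁻¹) ^ 2) • (u * K) - (β k * q ^ 2) • (u * K'), ?_⟩
    have step1 : E ^ (k+1) * F ^ (k+1)
        = E ^ k * (F ^ (k+1) * E) + α k • (E ^ k * (F ^ k * K)) - β k • (E ^ k * (F ^ k * K')) := by
      calc E ^ (k+1) * F ^ (k+1) = E ^ k * (E * F ^ (k+1)) := by rw [pow_succ, mul_assoc]
        _ = E ^ k * (F ^ (k+1) * E + α k • (F ^ k * K) - β k • (F ^ k * K')) := by rw [hcomm k]
        _ = _ := by simp only [mul_add, mul_sub, mul_smul_comm]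
    have e1 : E ^ k * (F ^ k * K) = C k • (Qf k * (K' ^ k * K)) + u * (E * K) := by
      rw [← mul_assoc, hu]
      simp only [add_mul, smul_mul_assoc, mul_assoc]
    have e2 : E ^ k * (F ^ k * K') = C k • (Qf k * (K' ^ k * K')) + u * (E * K') := by
      rw [← mul_assoc, hu]
      simp only [add_mul, smul_mul_assoc, mul_assoc]
    have e3 : (1 - (q⁻¹) ^ (2*k) • (K * K)) * Qf k * K' ^ (k+1)
        = Qf k * K' ^ (k+1) - (q⁻¹) ^ (2*k) • (Qf k * (K' ^ k * K)) := by
      simp only [sub_mul, one_mul, smul_mul_assoc]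
      congr 1
      congr 1
      simp only [mul_assoc]
      exact hKQ k
    rw [step1, e1, e2, hEK, hEK', hQsucc k, hCsucc k, e3]
    simp only [hα, smul_add, smul_sub, mul_smul_comm, smul_smul, add_mul, sub_mul,
      smul_mul_assoc, mul_assoc, ← pow_succ]
    module

theorem stmt {R : Type*} [Ring R] [Algebra ℝ R] (q : ℝ) (hq0 : 0 < q) (hq1 : q < 1)
    (E₁ E₂ F₁ F₂ K₁ K₁' K₂ K₂' : R)
    (h : UqSL3 R q E₁ E₂ F₁ F₂ K₁ K₁' K₂ K₂') (k : ℕ) :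
    (∃ u : R, E₁ ^ k * F₁ ^ k
      = (q ^ (k:ℤ) * (∏ j ∈ Finset.range k, (1 - q ^ (2 + 2 * (j:ℤ)))) / (1 - q ^ 2) ^ (2 * k)) •
          (((List.range k).map (fun j => (1 : R) - q ^ (2 - 2 * (k:ℤ) + 2 * (j:ℤ)) • (K₁ * K₁))).prod
            * K₁' ^ k)
        + u * E₁) ∧
    (∃ u : R, E₂ ^ k * F₂ ^ k
      = (q ^ (k:ℤ) * (∏ j ∈ Finset.range k, (1 - q ^ (2 + 2 * (j:ℤ)))) / (1 - q ^ 2) ^ (2 * k)) •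
          (((List.range k).map (fun j => (1 : R) - q ^ (2 - 2 * (k:ℤ) + 2 * (j:ℤ)) • (K₂ * K₂))).prod
            * K₂' ^ k)
        + u * E₂) := by
  exact ⟨rank1 q hq0 hq1 E₁ F₁ K₁ K₁' h.K₁mul h.K₁mul' h.KE11 h.KF11 h.EF11 k,
         rank1 q hq0 hq1 E₂ F₂ K₂ K₂' h.K₂mul h.K₂mul' h.KE22 h.KF22 h.EF22 k⟩
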